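/- arXiv:1202.1352 — 2 statements merged into one kernel-verified Lean document; each statement's English description precedes it below -/
import Mathlib

section
/- Let m ≥ 1 and n ≥ 2m be integers with n > n_0, where n_0 is defined from the prime factorization of n as in the context, and let n_1 be a positive integer with n_0·n_1 < n. If 3·n_0·n_1 − n_0²·n_1²/n ≤ 4m, then for every vector y of the following set, J̃(n,m) ∪ {y} is an m-distance set: if m < n_0n_1, the set of all vectors with n − n_0n_1 + m coordinates equal to n_0n_1/n and n_0n_1 − m coordinates equal to −1 + n_0n_1/n; if m = n_0n_1, the single vector all of whose n coordinates equal m/n; if m > n_0n_1, the set of all vectors with m − n_0n_1 coordinates equal to 1 + n_0n_1/n and n + n_0n_1 − m coordinates equal to n_0n_1/n. -/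
noncomputable section

/-- The set of distances between distinct points of `S`. -/
def distSet {n : ℕ} (S : Set (EuclideanSpace ℝ (Fin n))) : Set ℝ :=
  {d | ∃ x ∈ S, ∃ y ∈ S, x ≠ y ∧ d = dist x y}

/-- `S` is an `s`-distance set: exactly `s` distances occur between distinct points. -/
def IsSDistanceSet {n : ℕ} (s : ℕ) (S : Set (EuclideanSpace ℝ (Fin n))) : Prop :=
  (distSet S).Finite ∧ (distSet S).ncard = s

/-- The representation `J̃(n,m)` of the Johnson graph `J(n,m)`: vectors with exactly `m`
coordinates equal to `1` and the rest equal to `0`. -/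
def JohnsonRep (n m : ℕ) : Set (EuclideanSpace ℝ (Fin n)) :=
  {x | (∀ i, x i = 0 ∨ x i = 1) ∧ {i : Fin n | x i = 1}.ncard = m}

/-- The hyperplane `H(n,m) = {x : ∑ x_i = m}`. -/
def Hyp (n m : ℕ) : Set (EuclideanSpace ℝ (Fin n)) :=
  {x | ∑ i, x i = (m : ℝ)}

/-- For `n = 2^{e₀} ∏ pᵢ^{eᵢ}` (pᵢ odd primes), `nzero n` is
`∏ pᵢ^{⌈eᵢ/2⌉}` if `e₀ = 0` and `2^{⌈(e₀+1)/2⌉} ∏ pᵢ^{⌈eᵢ/2⌉}` if `e₀ > 0`. -/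
def nzero (n : ℕ) : ℕ :=
  ∏ p ∈ n.primeFactors,
    p ^ (if p = 2 then n.factorization p / 2 + 1 else (n.factorization p + 1) / 2)

lemma dist_sq_eq {n : ℕ} (x y : EuclideanSpace ℝ (Fin n)) :
    dist x y ^ 2 = ∑ i, (x i - y i) ^ 2 := by
  rw [EuclideanSpace.dist_eq, Real.sq_sqrt (by positivity)]
  simp [Real.dist_eq, sq_abs]

lemma dist_sq_formula {n : ℕ} (x y : EuclideanSpace ℝ (Fin n)) (A B : Finset (Fin n)) (α β : ℝ)
    (hx1 : ∀ i ∈ A, x i = 1) (hx0 : ∀ i ∉ A, x i = 0)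
    (hyB : ∀ i ∈ B, y i = β) (hyc : ∀ i ∉ B, y i = α) :
    dist x y ^ 2 = ((A ∩ B).card : ℝ) * (1 - β)^2
      + ((A.card : ℝ) - ((A ∩ B).card : ℝ)) * (1 - α)^2
      + ((B.card : ℝ) - ((A ∩ B).card : ℝ)) * β^2
      + ((n : ℝ) - (A.card : ℝ) - (B.card : ℝ) + ((A ∩ B).card : ℝ)) * α^2 := by
  have key : dist x y ^ 2 = ((A ∩ B).card : ℝ) * (1 - β)^2
      + ((A \ B).card : ℝ) * (1 - α)^2
      + ((B \ A).card : ℝ) * β^2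
      + (((A ∪ B)ᶜ).card : ℝ) * α^2 := by
    rw [dist_sq_eq]
    have h1 : ∑ i, (x i - y i) ^ 2
        = ∑ i ∈ A, (x i - y i)^2 + ∑ i ∈ Aᶜ, (x i - y i)^2 :=
      (Finset.sum_add_sum_compl A _).symm
    have h2 : ∑ i ∈ A, (x i - y i)^2
        = ∑ i ∈ A ∩ B, (x i - y i)^2 + ∑ i ∈ A \ B, (x i - y i)^2 :=
      (Finset.sum_inter_add_sum_sdiff A B _).symm
    have h3 : ∑ i ∈ Aᶜ, (x i - y i)^2
        = ∑ i ∈ Aᶜ ∩ B, (x i - y i)^2 + ∑ i ∈ Aᶜ \ B, (x i - y i)^2 :=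
      (Finset.sum_inter_add_sum_sdiff Aᶜ B _).symm
    have e1 : ∑ i ∈ A ∩ B, (x i - y i)^2 = ((A ∩ B).card : ℝ) * (1 - β)^2 := by
      rw [Finset.sum_congr rfl (fun i hi => by
        rw [hx1 i (Finset.mem_inter.1 hi).1, hyB i (Finset.mem_inter.1 hi).2]),
        Finset.sum_const, nsmul_eq_mul]
    have e2 : ∑ i ∈ A \ B, (x i - y i)^2 = ((A \ B).card : ℝ) * (1 - α)^2 := by
      rw [Finset.sum_congr rfl (fun i hi => by
        rw [hx1 i (Finset.mem_sdiff.1 hi).1, hyc i (Finset.mem_sdiff.1 hi).2]),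
        Finset.sum_const, nsmul_eq_mul]
    have e3 : ∑ i ∈ Aᶜ ∩ B, (x i - y i)^2 = ((Aᶜ ∩ B).card : ℝ) * (0 - β)^2 := by
      rw [Finset.sum_congr rfl (fun i hi => by
        rw [hx0 i (Finset.mem_compl.1 (Finset.mem_inter.1 hi).1), hyB i (Finset.mem_inter.1 hi).2]),
        Finset.sum_const, nsmul_eq_mul]
    have e4 : ∑ i ∈ Aᶜ \ B, (x i - y i)^2 = ((Aᶜ \ B).card : ℝ) * (0 - α)^2 := by
      rw [Finset.sum_congr rfl (fun i hi => by
        rw [hx0 i (Finset.mem_compl.1 (Finset.mem_sdiff.1 hi).1), hyc i (Finset.mem_sdiff.1 hi).2]),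
        Finset.sum_const, nsmul_eq_mul]
    have hBA : Aᶜ ∩ B = B \ A := by ext i; simp [Finset.mem_sdiff, and_comm]
    have hU : Aᶜ \ B = (A ∪ B)ᶜ := by ext i; simp [not_or, and_comm]
    rw [h1, h2, h3, e1, e2, e3, e4, hBA, hU]; ring
  rw [key]
  have c1 : ((A \ B).card : ℝ) = (A.card : ℝ) - ((A ∩ B).card : ℝ) := by
    have := Finset.card_sdiff_add_card_inter A B
    have : ((A \ B).card : ℝ) + ((A ∩ B).card : ℝ) = (A.card : ℝ) := by exact_mod_cast this
    linarith
  have c2 : ((B \ A).card : ℝ) = (B.card : ℝ) - ((A ∩ B).card : ℝ) := by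
    have := Finset.card_sdiff_add_card_inter B A
    have h' : ((B \ A).card : ℝ) + ((B ∩ A).card : ℝ) = (B.card : ℝ) := by exact_mod_cast this
    rw [Finset.inter_comm] at h'; linarith
  have c3 : (((A ∪ B)ᶜ).card : ℝ) = (n : ℝ) - (A.card : ℝ) - (B.card : ℝ) + ((A ∩ B).card : ℝ) := by
    have hc := Finset.card_compl (A ∪ B)
    have hu := Finset.card_union_add_card_inter A B
    have hle : (A ∪ B).card ≤ n := by
      have := Finset.card_le_univ (A ∪ B); simpa using this
    have h1 : ((A ∪ B)ᶜ).card + (A ∪ B).card = n := by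
      rw [hc]; simp; omega
    have h1' : (((A ∪ B)ᶜ).card : ℝ) + ((A ∪ B).card : ℝ) = (n : ℝ) := by exact_mod_cast h1
    have h2' : ((A ∪ B).card : ℝ) + ((A ∩ B).card : ℝ) = (A.card : ℝ) + (B.card : ℝ) := by
      exact_mod_cast hu
    linarith
  rw [c1, c2, c3]

lemma johnson_finset {n m : ℕ} {x : EuclideanSpace ℝ (Fin n)} (hx : x ∈ JohnsonRep n m) :
    ∃ A : Finset (Fin n), A.card = m ∧ (∀ i ∈ A, x i = 1) ∧ (∀ i ∉ A, x i = 0) := by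
  classical
  refine ⟨Finset.univ.filter (fun i => x i = 1), ?_, ?_, ?_⟩
  · have : {i : Fin n | x i = 1} = ↑(Finset.univ.filter (fun i => x i = 1)) := by ext i; simp
    rw [← Set.ncard_coe_finset, ← this]; exact hx.2
  · intro i hi; exact (Finset.mem_filter.1 hi).2
  · intro i hi
    rcases hx.1 i with h | h
    · exact h
    · exact absurd (Finset.mem_filter.2 ⟨Finset.mem_univ i, h⟩) hi

lemma dist_of_sq {n : ℕ} {x z : EuclideanSpace ℝ (Fin n)} {c : ℝ}
    (h : dist x z ^ 2 = c) : dist x z = Real.sqrt c := by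
  rw [← h, Real.sqrt_sq dist_nonneg]

lemma johnson_dist {n m : ℕ} {x z : EuclideanSpace ℝ (Fin n)}
    (hx : x ∈ JohnsonRep n m) (hz : z ∈ JohnsonRep n m) (hne : x ≠ z) :
    ∃ k : ℕ, 1 ≤ k ∧ k ≤ m ∧ dist x z = Real.sqrt (2 * k) := by
  obtain ⟨A, hA, hA1, hA0⟩ := johnson_finset hx
  obtain ⟨C, hC, hC1, hC0⟩ := johnson_finset hz
  set t := (A ∩ C).card with ht
  have htm : t ≤ m := hA ▸ Finset.card_le_card (Finset.inter_subset_left)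
  have htm' : t ≠ m := by
    intro h
    apply hne
    have h1 : A ∩ C = A := Finset.eq_of_subset_of_card_le Finset.inter_subset_left (by omega)
    have h2 : A ⊆ C := by rw [← h1]; exact Finset.inter_subset_right
    have h3 : A = C := Finset.eq_of_subset_of_card_le h2 (by omega)
    ext i
    by_cases hi : i ∈ A
    · rw [hA1 i hi, hC1 i (h3 ▸ hi)]
    · rw [hA0 i hi, hC0 i (fun hc => hi (h3 ▸ hc))]
  refine ⟨m - t, by omega, by omega, dist_of_sq ?_⟩
  have := dist_sq_formula x z A C 0 1 hA1 hA0 hC1 hC0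
  rw [this, hA, hC]
  have : ((m - t : ℕ) : ℝ) = (m : ℝ) - t := by
    have : t ≤ m := htm
    push_cast [Nat.cast_sub this]; ring
  rw [this]; ring

lemma filter_val_eq {n : ℕ} (p : ℕ → Prop) [DecidablePred p] (F : Finset ℕ)
    (hF : ∀ j, j ∈ F ↔ (j < n ∧ p j)) :
    (Finset.univ.filter (fun i : Fin n => p i.val)).card = F.card := by
  classical
  rw [← Finset.card_image_of_injective (Finset.univ.filter (fun i : Fin n => p i.val))
    Fin.val_injective]
  congr 1
  ext a
  simp only [Finset.mem_image, Finset.mem_filter, Finset.mem_univ, true_and, hF]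
  constructor
  · rintro ⟨i, hp, rfl⟩; exact ⟨i.isLt, hp⟩
  · rintro ⟨ha, hp⟩; exact ⟨⟨a, ha⟩, hp, rfl⟩

lemma johnson_exists_dist {n m : ℕ} (hm : 1 ≤ m) (hn : 2 * m ≤ n) (k : ℕ) (hk1 : 1 ≤ k)
    (hkm : k ≤ m) :
    ∃ x ∈ JohnsonRep n m, ∃ z ∈ JohnsonRep n m, dist x z = Real.sqrt (2 * k) := by
  classical
  set x : EuclideanSpace ℝ (Fin n) := WithLp.toLp 2 (fun i => if (i : ℕ) < m then 1 else 0) with hxdef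
  set z : EuclideanSpace ℝ (Fin n) := WithLp.toLp 2 (fun i => if k ≤ (i : ℕ) ∧ (i : ℕ) < k + m then 1 else 0)
    with hzdef
  set A : Finset (Fin n) := Finset.univ.filter (fun i : Fin n => (i : ℕ) < m) with hAdef
  set C : Finset (Fin n) := Finset.univ.filter (fun i : Fin n => k ≤ (i : ℕ) ∧ (i : ℕ) < k + m)
    with hCdef
  have hx1 : ∀ i ∈ A, x i = 1 := by intro i hi; simp only [hxdef]
                                    exact if_pos (Finset.mem_filter.1 hi).2
  have hx0 : ∀ i ∉ A, x i = 0 := by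
    intro i hi; simp only [hxdef]
    exact if_neg (fun h => hi (Finset.mem_filter.2 ⟨Finset.mem_univ i, h⟩))
  have hz1 : ∀ i ∈ C, z i = 1 := by intro i hi; simp only [hzdef]
                                    exact if_pos (Finset.mem_filter.1 hi).2
  have hz0 : ∀ i ∉ C, z i = 0 := by
    intro i hi; simp only [hzdef]
    exact if_neg (fun h => hi (Finset.mem_filter.2 ⟨Finset.mem_univ i, h⟩))
  have hAcard : A.card = m := by
    rw [hAdef, filter_val_eq (fun j => j < m) (Finset.range m)
      (by intro j; simp [Finset.mem_range]; omega)]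
    exact Finset.card_range m
  have hCcard : C.card = m := by
    rw [hCdef, filter_val_eq (fun j => k ≤ j ∧ j < k + m) (Finset.Ico k (k + m))
      (by intro j; simp [Finset.mem_Ico]; omega)]
    simp [Nat.card_Ico]
  have hACcard : (A ∩ C).card = m - k := by
    have : A ∩ C = Finset.univ.filter (fun i : Fin n => k ≤ (i : ℕ) ∧ (i : ℕ) < m) := by
      ext i
      simp only [hAdef, hCdef, Finset.mem_inter, Finset.mem_filter, Finset.mem_univ, true_and]
      omega
    rw [this, filter_val_eq (fun j => k ≤ j ∧ j < m) (Finset.Ico k m)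
      (by intro j; simp [Finset.mem_Ico]; omega)]
    simp [Nat.card_Ico]
  have hsupp : ∀ (w : EuclideanSpace ℝ (Fin n)) (D : Finset (Fin n)),
      (∀ i ∈ D, w i = 1) → (∀ i ∉ D, w i = 0) → D.card = m → w ∈ JohnsonRep n m := by
    intro w D h1 h0 hc
    constructor
    · intro i; by_cases hi : i ∈ D
      · exact Or.inr (h1 i hi)
      · exact Or.inl (h0 i hi)
    · have : {i : Fin n | w i = 1} = ↑D := by
        ext i
        simp only [Set.mem_setOf_eq, Finset.coe_sort_coe, Finset.mem_coe]
        constructor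
        · intro h; by_cases hi : i ∈ D
          · exact hi
          · rw [h0 i hi] at h; norm_num at h
        · intro hi; exact h1 i hi
      rw [this, Set.ncard_coe_finset, hc]
  refine ⟨x, hsupp x A hx1 hx0 hAcard, z, hsupp z C hz1 hz0 hCcard, dist_of_sq ?_⟩
  rw [dist_sq_formula x z A C 0 1 hx1 hx0 hz1 hz0, hAcard, hCcard, hACcard]
  have : ((m - k : ℕ) : ℝ) = (m : ℝ) - k := by push_cast [Nat.cast_sub hkm]; ring
  rw [this]; ring

lemma nzero_pos (n : ℕ) : 0 < nzero n :=
  Finset.prod_pos fun p hp => pow_pos (Nat.pos_of_mem_primeFactors hp) _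

lemma dvd_nzero_sq (n : ℕ) (hn : n ≠ 0) : n ∣ (nzero n) ^ 2 := by
  have hfact : ∏ p ∈ n.primeFactors, p ^ n.factorization p = n := by
    rw [← Nat.support_factorization]
    exact Nat.factorization_prod_pow_eq_self hn
  have hsq : (nzero n) ^ 2 = ∏ p ∈ n.primeFactors,
      p ^ (2 * (if p = 2 then n.factorization p / 2 + 1 else (n.factorization p + 1) / 2)) := by
    rw [nzero, ← Finset.prod_pow]
    refine Finset.prod_congr rfl fun p _ => ?_
    rw [← pow_mul, mul_comm]
  rw [hsq]
  conv_lhs => rw [← hfact]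
  refine Finset.prod_dvd_prod_of_dvd
    (fun p => p ^ n.factorization p)
    (fun p => p ^ (2 * (if p = 2 then n.factorization p / 2 + 1 else (n.factorization p + 1) / 2)))
    fun p _ => pow_dvd_pow p (by split <;> omega)

lemma two_dvd_nzero (n : ℕ) (hn : n ≠ 0) (h2 : 2 ∣ n) : 2 ∣ nzero n := by
  have hmem : 2 ∈ n.primeFactors := Nat.mem_primeFactors.2 ⟨Nat.prime_two, h2, hn⟩
  have h := Finset.dvd_prod_of_mem
    (fun p : ℕ => p ^ (if p = 2 then n.factorization p / 2 + 1 else (n.factorization p + 1) / 2))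
    hmem
  simp only [if_pos rfl] at h
  exact dvd_trans (dvd_pow_self 2 (Nat.succ_ne_zero _)) h

lemma parity_key (n N q : ℕ) (hn : 0 < n) (hnz : 2 ∣ n → 2 ∣ N)
    (hqn : q * n = N ^ 2) (h2e : 2 ∣ n → 2 ^ (n.factorization 2 + 1) ∣ N ^ 2) :
    N % 2 = q % 2 := by
  rcases Nat.even_or_odd n with he | ho
  · -- n even
    have h2n : 2 ∣ n := he.two_dvd
    have hNe : 2 ∣ N := hnz h2n
    have hqe : 2 ∣ q := by
      set e := n.factorization 2 with hedef
      have hord := Nat.ordProj_mul_ordCompl_eq_self n 2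
      have hu : ¬ (2 ∣ n / 2 ^ e) := Nat.not_dvd_ordCompl Nat.prime_two hn.ne'
      have hdd : 2 ^ e * 2 ∣ 2 ^ e * (q * (n / 2 ^ e)) := by
        rw [← mul_assoc, mul_comm (2^e) q, mul_assoc, hord, hqn]
        rw [← pow_succ]
        exact h2e h2n
      have h2qu : 2 ∣ q * (n / 2 ^ e) :=
        (mul_dvd_mul_iff_left (pow_ne_zero e (two_ne_zero))).1 hdd
      rcases (Nat.prime_two.dvd_mul).1 h2qu with h | h
      · exact h
      · exact absurd h hu
    obtain ⟨a, ha⟩ := hNe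
    obtain ⟨b, hb⟩ := hqe
    omega
  · -- n odd
    have h1 : n % 2 = 1 := Nat.odd_iff.1 ho
    have hmm := Nat.mul_mod q n 2
    rw [h1, mul_one, Nat.mod_mod_of_dvd _ (dvd_refl 2), hqn] at hmm
    have hsq : N ^ 2 % 2 = N % 2 := by
      rcases Nat.even_or_odd N with h | h
      · have h1 : 2 ∣ N ^ 2 := Dvd.dvd.pow h.two_dvd (by norm_num)
        have h2 : 2 ∣ N := h.two_dvd
        omega
      · have h' := h.pow (n := 2)
        have := Nat.odd_iff.1 h'
        have := Nat.odd_iff.1 h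
        omega
    rw [← hmm, hsq]


lemma pow_dvd_nzero_sq (n : ℕ) (hn : n ≠ 0) (h2 : 2 ∣ n) :
    2 ^ (n.factorization 2 + 1) ∣ (nzero n) ^ 2 := by
  have hmem : 2 ∈ n.primeFactors := Nat.mem_primeFactors.2 ⟨Nat.prime_two, h2, hn⟩
  have h : (2:ℕ) ^ (n.factorization 2 / 2 + 1) ∣ nzero n := by
    have h := Finset.dvd_prod_of_mem
      (fun p : ℕ => p ^ (if p = 2 then n.factorization p / 2 + 1 else (n.factorization p + 1) / 2))
      hmem
    simp only [if_pos rfl] at h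
    exact h
  have h2' : (2:ℕ) ^ (2 * (n.factorization 2 / 2 + 1)) ∣ (nzero n) ^ 2 := by
    rw [mul_comm, pow_mul]
    exact pow_dvd_pow_of_dvd h 2
  exact dvd_trans (pow_dvd_pow 2 (by omega)) h2'

lemma ncard_filter_eq {n : ℕ} (y : EuclideanSpace ℝ (Fin n)) (v : ℝ) [DecidablePred (fun i : Fin n => y i = v)] :
    {i : Fin n | y i = v}.ncard = (Finset.univ.filter (fun i : Fin n => y i = v)).card := by
  rw [← Set.ncard_coe_finset]
  congr 1
  ext i; simp

theorem add_vector_of_cond_general (n m n1 : ℕ) (hm : 1 ≤ m) (hn : 2 * m ≤ n)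
    (h0 : nzero n < n) (hn1 : 0 < n1) (hn1n : nzero n * n1 < n)
    (h2 : 3 * ((nzero n : ℝ) * n1) - (nzero n : ℝ) ^ 2 * (n1 : ℝ) ^ 2 / n ≤ 4 * m)
    (y : EuclideanSpace ℝ (Fin n))
    (hy :
      (m < nzero n * n1 ∧
        {i : Fin n | y i = ((nzero n : ℝ) * n1) / n}.ncard = n - nzero n * n1 + m ∧
        {i : Fin n | y i = -1 + ((nzero n : ℝ) * n1) / n}.ncard = nzero n * n1 - m) ∨
      (m = nzero n * n1 ∧ ∀ i, y i = (m : ℝ) / n) ∨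
      (nzero n * n1 < m ∧
        {i : Fin n | y i = 1 + ((nzero n : ℝ) * n1) / n}.ncard = m - nzero n * n1 ∧
        {i : Fin n | y i = ((nzero n : ℝ) * n1) / n}.ncard = n + nzero n * n1 - m)) :
    IsSDistanceSet m (JohnsonRep n m ∪ {y}) := by
  classical
  have hnpos : 0 < n := by omega
  set N := nzero n * n1 with hNdef
  have hN0 : 0 < N := Nat.mul_pos (nzero_pos n) hn1
  have hNsq : N ^ 2 = (nzero n) ^ 2 * n1 ^ 2 := by rw [hNdef, mul_pow]
  have hdvdN : n ∣ N ^ 2 := by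
    rw [hNsq]; exact dvd_mul_of_dvd_left (dvd_nzero_sq n hnpos.ne') _
  set q := N ^ 2 / n with hqdef
  have hqn : q * n = N ^ 2 := Nat.div_mul_cancel hdvdN
  have hqN : q < N := by
    have h1 : q * n < N * n := by
      rw [hqn]; calc N ^ 2 = N * N := sq N
        _ < N * n := (Nat.mul_lt_mul_left hN0).2 hn1n
    exact lt_of_mul_lt_mul_right h1 (Nat.zero_le n)
  have hpar : N % 2 = q % 2 := by
    refine parity_key n N q hnpos (fun h2 => ?_) hqn (fun h2 => ?_)
    · exact dvd_mul_of_dvd_left (two_dvd_nzero n hnpos.ne' h2) n1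
    · rw [hNsq]; exact dvd_mul_of_dvd_left (pow_dvd_nzero_sq n hnpos.ne' h2) _
  set c := (N - q) / 2 with hcdef
  have hc : N = q + 2 * c := by omega
  have hc1 : 1 ≤ c := by omega
  -- real versions
  have hnR : (n : ℝ) ≠ 0 := Nat.cast_ne_zero.2 hnpos.ne'
  have hqnR : (q : ℝ) * n = (N : ℝ) ^ 2 := by exact_mod_cast hqn
  have hcR : (N : ℝ) = q + 2 * c := by exact_mod_cast hc
  have hNR : ((nzero n : ℝ) * n1) = (N : ℝ) := by rw [hNdef]; push_cast; ring
  -- the numeric hypothesis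
  have h2' : 3 * N ≤ 4 * m + q := by
    have hqR : (q : ℝ) = (N : ℝ) ^ 2 / n := by
      field_simp
      linarith [hqnR]
    rw [hNR] at h2
    have hNsqR : (nzero n : ℝ) ^ 2 * (n1 : ℝ) ^ 2 = (N : ℝ) ^ 2 := by
      rw [← hNR]; ring
    rw [hNsqR, ← hqR] at h2
    have : (3 * N : ℝ) ≤ 4 * m + q := by push_cast; linarith
    exact_mod_cast this
  clear hNsq hqdef hcdef hdvdN hpar
  clear_value c q N
  -- distances from y to Johnson points
  have hydist : ∀ x ∈ JohnsonRep n m, ∃ k : ℕ, 1 ≤ k ∧ k ≤ m ∧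
      dist x y = Real.sqrt (2 * k) := by
    intro x hx
    obtain ⟨A, hA, hA1, hA0⟩ := johnson_finset hx
    rcases hy with ⟨hlt, hS1, hS2⟩ | ⟨heq, hval⟩ | ⟨hgt, hS1, hS2⟩
    · -- case m < N
      set v1 : ℝ := ((nzero n : ℝ) * n1) / n with hv1
      set v2 : ℝ := -1 + ((nzero n : ℝ) * n1) / n with hv2
      set F1 := Finset.univ.filter (fun i : Fin n => y i = v1) with hF1
      set F2 := Finset.univ.filter (fun i : Fin n => y i = v2) with hF2
      have hF1c : F1.card = n - N + m := by rw [← ncard_filter_eq]; exact hS1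
      have hF2c : F2.card = N - m := by rw [← ncard_filter_eq]; exact hS2
      have hdisj : Disjoint F1 F2 := by
        rw [Finset.disjoint_left]
        intro i h1 h2
        have e1 := (Finset.mem_filter.1 h1).2
        have e2 := (Finset.mem_filter.1 h2).2
        rw [e1] at e2
        rw [hv1, hv2] at e2
        linarith
      have hcover : F1 ∪ F2 = Finset.univ := by
        apply Finset.eq_univ_of_card
        rw [Finset.card_union_of_disjoint hdisj, hF1c, hF2c, Fintype.card_fin]
        omega
      have hyc : ∀ i ∉ F2, y i = v1 := by
        intro i hi
        have : i ∈ F1 ∪ F2 := hcover ▸ Finset.mem_univ i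
        rcases Finset.mem_union.1 this with h | h
        · exact (Finset.mem_filter.1 h).2
        · exact absurd h hi
      have hyB : ∀ i ∈ F2, y i = v2 := fun i hi => (Finset.mem_filter.1 hi).2
      set t := (A ∩ F2).card with htdef
      have htA : t ≤ m := hA ▸ Finset.card_le_card Finset.inter_subset_left
      have htB : t ≤ N - m := hF2c ▸ Finset.card_le_card Finset.inter_subset_right
      refine ⟨t + c, by omega, by omega, dist_of_sq ?_⟩
      rw [dist_sq_formula x y A F2 v1 v2 hA1 hA0 hyB hyc, hA, hF2c]
      have hc2 : ((N - m : ℕ) : ℝ) = (N : ℝ) - m := by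
        push_cast [Nat.cast_sub hlt.le]; ring
      rw [hc2, hv1, hv2, hNR]
      push_cast
      field_simp
      linear_combination (n:ℝ)^2 * hcR + (n:ℝ) * hqnR
    · -- case m = N
      have hyc : ∀ i ∉ (∅ : Finset (Fin n)), y i = (m : ℝ) / n := fun i _ => hval i
      have hyB : ∀ i ∈ (∅ : Finset (Fin n)), y i = (0 : ℝ) := fun i hi => absurd hi (by simp)
      refine ⟨c, hc1, by omega, dist_of_sq ?_⟩
      rw [dist_sq_formula x y A ∅ ((m : ℝ)/n) 0 hA1 hA0 hyB hyc, hA]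
      simp only [Finset.inter_empty, Finset.card_empty, Nat.cast_zero, Finset.card_empty]
      have hmN : (m : ℝ) = (N : ℝ) := by exact_mod_cast heq
      rw [hmN]
      field_simp
      linear_combination (n:ℝ)^2 * hcR + (n:ℝ) * hqnR
    · -- case N < m
      set v1 : ℝ := ((nzero n : ℝ) * n1) / n with hv1
      set v2 : ℝ := 1 + ((nzero n : ℝ) * n1) / n with hv2
      set F1 := Finset.univ.filter (fun i : Fin n => y i = v1) with hF1
      set F2 := Finset.univ.filter (fun i : Fin n => y i = v2) with hF2
      have hF1c : F1.card = n + N - m := by rw [← ncard_filter_eq]; exact hS2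
      have hF2c : F2.card = m - N := by rw [← ncard_filter_eq]; exact hS1
      have hdisj : Disjoint F1 F2 := by
        rw [Finset.disjoint_left]
        intro i h1 h2
        have e1 := (Finset.mem_filter.1 h1).2
        have e2 := (Finset.mem_filter.1 h2).2
        rw [e1] at e2
        rw [hv1, hv2] at e2
        linarith
      have hcover : F1 ∪ F2 = Finset.univ := by
        apply Finset.eq_univ_of_card
        rw [Finset.card_union_of_disjoint hdisj, hF1c, hF2c, Fintype.card_fin]
        omega
      have hyc : ∀ i ∉ F2, y i = v1 := by
        intro i hi
        have : i ∈ F1 ∪ F2 := hcover ▸ Finset.mem_univ i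
        rcases Finset.mem_union.1 this with h | h
        · exact (Finset.mem_filter.1 h).2
        · exact absurd h hi
      have hyB : ∀ i ∈ F2, y i = v2 := fun i hi => (Finset.mem_filter.1 hi).2
      set t := (A ∩ F2).card with htdef
      have htB : t ≤ m - N := hF2c ▸ Finset.card_le_card Finset.inter_subset_right
      refine ⟨(m - N - t) + c, by omega, by omega, dist_of_sq ?_⟩
      rw [dist_sq_formula x y A F2 v1 v2 hA1 hA0 hyB hyc, hA, hF2c]
      have hc2 : ((m - N : ℕ) : ℝ) = (m : ℝ) - N := by
        push_cast [Nat.cast_sub hgt.le]; ring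
      have hc3 : ((m - N - t + c : ℕ) : ℝ) = (m : ℝ) - N - t + c := by
        push_cast [Nat.cast_sub htB, Nat.cast_sub hgt.le]; ring
      rw [hc2, hc3, hv1, hv2, hNR]
      push_cast
      field_simp
      linear_combination (n:ℝ)^2 * hcR + (n:ℝ) * hqnR
  -- assemble
  set D : Set ℝ := (fun k : ℕ => Real.sqrt (2 * k)) '' (Set.Icc 1 m) with hD
  have hEq : distSet (JohnsonRep n m ∪ {y}) = D := by
    apply Set.Subset.antisymm
    · rintro d ⟨u, hu, v, hv, hne, rfl⟩
      rcases hu with hu | hu <;> rcases hv with hv | hv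
      · obtain ⟨k, h1, h2, h3⟩ := johnson_dist hu hv hne
        exact ⟨k, Set.mem_Icc.2 ⟨h1, h2⟩, h3.symm⟩
      · rw [Set.mem_singleton_iff.1 hv]
        obtain ⟨k, h1, h2, h3⟩ := hydist u hu
        exact ⟨k, Set.mem_Icc.2 ⟨h1, h2⟩, h3.symm⟩
      · rw [Set.mem_singleton_iff.1 hu, dist_comm]
        obtain ⟨k, h1, h2, h3⟩ := hydist v hv
        exact ⟨k, Set.mem_Icc.2 ⟨h1, h2⟩, h3.symm⟩
      · exact absurd (Set.mem_singleton_iff.1 hu ▸ Set.mem_singleton_iff.1 hv ▸ rfl) hne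
    · rintro d ⟨k, hk, rfl⟩
      obtain ⟨hk1, hk2⟩ := Set.mem_Icc.1 hk
      obtain ⟨x, hx, z, hz, hxz⟩ := johnson_exists_dist hm hn k hk1 hk2
      have hne : x ≠ z := by
        intro h
        rw [h, dist_self] at hxz
        have : (0:ℝ) < Real.sqrt (2 * k) := Real.sqrt_pos.2 (by positivity)
        linarith [hxz ▸ this]
      exact ⟨x, Or.inl hx, z, Or.inl hz, hne, hxz.symm⟩
  constructor
  · rw [hEq]; exact (Set.finite_Icc 1 m).image _
  · rw [hEq, hD, Set.ncard_image_of_injOn, ← Finset.coe_Icc, Set.ncard_coe_finset, Nat.card_Icc]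
    · omega
    · intro a _ b _ hab
      have ha : (0:ℝ) ≤ 2 * a := by positivity
      have hb : (0:ℝ) ≤ 2 * b := by positivity
      have := (Real.sqrt_inj ha hb).1 hab
      exact_mod_cast (by linarith : (a:ℝ) = b)
end
end

section
/- Let X ⊆ ℝ^9 be the set of the 9 vectors having eight coordinates equal to 1/3 and one coordinate equal to −2/3. Then J̃(9,2) ∪ X is a two-distance set of 45 points in H(9,2) whose two distances are √2 and 2; moreover, for every y ∈ H(9,2), if J̃(9,2) ∪ {y} is a two-distance set then y ∈ J̃(9,2) ∪ X. Consequently, J̃(9,2) ∪ X is the unique maximal two-distance set in H(9,2) containing J̃(9,2). -/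
noncomputable section

/-- The set `X = ((1/3)^8, -2/3)^P ⊆ ℝ⁹`: eight coordinates `1/3`, one coordinate `-2/3`. -/
def X92 : Set (EuclideanSpace ℝ (Fin 9)) :=
  {y | {i : Fin 9 | y i = 1/3}.ncard = 8 ∧ {i : Fin 9 | y i = -2/3}.ncard = 1}

def ptF (s : Finset (Fin 9)) : EuclideanSpace ℝ (Fin 9) := WithLp.toLp 2 (fun k => if k ∈ s then (1:ℝ) else 0)
def xp (p : Fin 9) : EuclideanSpace ℝ (Fin 9) := WithLp.toLp 2 (fun k => if k = p then (-2/3:ℝ) else 1/3)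

lemma J_eq : JohnsonRep 9 2 = {x | ∃ s : Finset (Fin 9), s.card = 2 ∧ x = ptF s} := by
  ext x
  constructor
  · rintro ⟨h01, hcard⟩
    refine ⟨(Set.toFinite {i | x i = 1}).toFinset, ?_, ?_⟩
    · rwa [← Set.ncard_eq_toFinset_card]
    · ext k
      show x k = if k ∈ _ then 1 else 0
      rcases h01 k with h | h <;> simp [Set.Finite.mem_toFinset, h]
  · rintro ⟨s, hs, rfl⟩
    constructor
    · intro i; by_cases h : i ∈ s
      · right; simp [ptF, h]
      · left; simp [ptF, h]
    · have : {i | ptF s i = 1} = ↑s := by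
        ext i; show (if i ∈ s then (1:ℝ) else 0) = 1 ↔ _; split <;> simp_all
      rw [this, Set.ncard_coe_finset, hs]

lemma X_eq : X92 = Set.range xp := by
  ext y
  constructor
  · rintro ⟨h8, h1⟩
    obtain ⟨p, hp⟩ := Set.ncard_eq_one.mp h1
    have hyp : y p = -2/3 := by
      have : p ∈ {i : Fin 9 | y i = -2/3} := by rw [hp]; exact rfl
      exact this
    have hcompl : {i : Fin 9 | y i = 1/3} = ↑(Finset.univ.erase p) := by
      have hsub : {i : Fin 9 | y i = 1/3} ⊆ ↑(Finset.univ.erase p) := by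
        intro i hi
        have hyi : y i = 1/3 := hi
        simp only [Finset.coe_erase, Set.mem_diff, Set.mem_singleton_iff, Finset.coe_univ]
        refine ⟨trivial, fun h => ?_⟩
        rw [h, hyp] at hyi; norm_num at hyi
      apply Set.eq_of_subset_of_ncard_le hsub
      rw [Set.ncard_coe_finset, Finset.card_erase_of_mem (Finset.mem_univ p),
          Finset.card_univ, Fintype.card_fin, h8]
    refine ⟨p, ?_⟩
    ext i
    show (if i = p then (-2/3:ℝ) else 1/3) = y i
    by_cases h : i = p
    · rw [if_pos h, h, hyp]
    · rw [if_neg h]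
      have : i ∈ {i : Fin 9 | y i = 1/3} := by
        rw [hcompl]; simp [h]
      exact (this : y i = 1/3).symm
  · rintro ⟨p, rfl⟩
    constructor
    · have : {i : Fin 9 | xp p i = 1/3} = ↑(Finset.univ.erase p) := by
        ext i; show (if i = p then (-2/3:ℝ) else 1/3) = 1/3 ↔ _; split <;> simp_all <;> norm_num
      rw [this, Set.ncard_coe_finset, Finset.card_erase_of_mem (Finset.mem_univ p)]; simp
    · have : {i : Fin 9 | xp p i = -2/3} = {p} := by
        ext i; show (if i = p then (-2/3:ℝ) else 1/3) = -2/3 ↔ _; split <;> simp_all <;> norm_num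
      rw [this, Set.ncard_singleton]

lemma dist_eq' (x y : EuclideanSpace ℝ (Fin 9)) : dist x y = Real.sqrt (∑ k, (x k - y k)^2) := by
  rw [EuclideanSpace.dist_eq]
  congr 1; apply Finset.sum_congr rfl; intro k _
  rw [Real.dist_eq, sq_abs]

lemma sum_sq_nonneg (x y : EuclideanSpace ℝ (Fin 9)) : (0:ℝ) ≤ ∑ k, (x k - y k)^2 :=
  Finset.sum_nonneg fun k _ => sq_nonneg _

lemma dist_cases {x y : EuclideanSpace ℝ (Fin 9)}
    (h : ∑ k, (x k - y k)^2 = 2 ∨ ∑ k, (x k - y k)^2 = 4) :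
    dist x y = Real.sqrt 2 ∨ dist x y = 2 := by
  rcases h with h | h
  · left; rw [dist_eq', h]
  · right; rw [dist_eq', h, show (4:ℝ) = 2^2 by norm_num, Real.sqrt_sq (by norm_num)]

lemma D_cases {x y : EuclideanSpace ℝ (Fin 9)}
    (h : dist x y = Real.sqrt 2 ∨ dist x y = 2) :
    ∑ k, (x k - y k)^2 = 2 ∨ ∑ k, (x k - y k)^2 = 4 := by
  have hD := (dist_eq' x y).symm
  rcases h with h | h
  · left
    have := Real.sq_sqrt (sum_sq_nonneg x y)
    rw [hD, h] at this
    rw [← this, Real.sq_sqrt (by norm_num : (0:ℝ) ≤ 2)]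
  · right
    have := Real.sq_sqrt (sum_sq_nonneg x y)
    rw [hD, h] at this
    rw [← this]; norm_num

lemma sum_ind_mul (s : Finset (Fin 9)) (f : Fin 9 → ℝ) :
    ∑ k, (if k ∈ s then (1:ℝ) else 0) * f k = ∑ k ∈ s, f k := by
  have : ∀ k , (if k ∈ s then (1:ℝ) else 0) * f k = if k ∈ s then f k else 0 := by
    intro k; split <;> simp
  simp only [this, Finset.sum_ite_mem, Finset.univ_inter]

lemma sum_ind_sq (s : Finset (Fin 9)) :
    ∑ k, ((if k ∈ s then (1:ℝ) else 0))^2 = s.card := by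
  have : ∀ k , ((if k ∈ s then (1:ℝ) else 0))^2 = if k ∈ s then (1:ℝ) else 0 := by
    intro k; split <;> norm_num
  simp only [this, Finset.sum_ite_mem, Finset.univ_inter, Finset.sum_const, nsmul_eq_mul, mul_one]

/-- master computation -/
lemma key (s : Finset (Fin 9)) (hs : s.card = 2) (y : EuclideanSpace ℝ (Fin 9)) :
    ∑ k, (ptF s k - y k)^2 = 2 - 2 * (∑ k ∈ s, y k) + ∑ k, (y k)^2 := by
  have expand : ∀ k, (ptF s k - y k)^2
      = (if k ∈ s then (1:ℝ) else 0)^2 - 2 * ((if k ∈ s then (1:ℝ) else 0) * y k) + (y k)^2 := by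
    intro k; show ((if k ∈ s then (1:ℝ) else 0) - y k)^2 = _; ring
  rw [Finset.sum_congr rfl (fun k _ => expand k)]
  rw [Finset.sum_add_distrib, Finset.sum_sub_distrib, sum_ind_sq, ← Finset.mul_sum, sum_ind_mul, hs]
  norm_num

lemma sum_in_ptF (s t : Finset (Fin 9)) : ∑ k ∈ s, ptF t k = ((s ∩ t).card : ℝ) := by
  show (∑ k ∈ s, if k ∈ t then (1:ℝ) else 0) = _
  rw [Finset.sum_ite_mem, Finset.sum_const, nsmul_eq_mul, mul_one]

lemma sum_sq_xp (p : Fin 9) : ∑ k, (xp p k)^2 = 4/3 := by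
  rw [← Finset.sum_erase_add _ _ (Finset.mem_univ p)]
  have h1 : ∑ k ∈ Finset.univ.erase p, (xp p k)^2 = 8 * (1/3)^2 := by
    rw [Finset.sum_congr rfl (fun k hk => by
      rw [show xp p k = 1/3 from if_neg (Finset.ne_of_mem_erase hk)])]
    rw [Finset.sum_const, Finset.card_erase_of_mem (Finset.mem_univ p), Finset.card_univ,
      Fintype.card_fin]
    norm_num
  rw [h1, show xp p p = -2/3 from if_pos rfl]
  norm_num

lemma sum_in_xp (s : Finset (Fin 9)) (hs : s.card = 2) (p : Fin 9) :
    ∑ k ∈ s, xp p k = 2/3 - (if p ∈ s then (1:ℝ) else 0) := by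
  have : ∀ k, xp p k = 1/3 - (if k = p then (1:ℝ) else 0) := by
    intro k; show (if k = p then (-2/3:ℝ) else 1/3) = _; split <;> norm_num
  rw [Finset.sum_congr rfl (fun k _ => this k), Finset.sum_sub_distrib, Finset.sum_const, hs,
    Finset.sum_ite_eq' s p (fun _ => (1:ℝ))]
  norm_num

lemma D_JX (s : Finset (Fin 9)) (hs : s.card = 2) (p : Fin 9) :
    ∑ k, (ptF s k - xp p k)^2 = 2 ∨ ∑ k, (ptF s k - xp p k)^2 = 4 := by
  rw [key s hs, sum_in_xp s hs p, sum_sq_xp]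
  by_cases h : p ∈ s
  · right; rw [if_pos h]; ring
  · left; rw [if_neg h]; ring

lemma ptF_inj {s t : Finset (Fin 9)} (h : ptF s = ptF t) : s = t := by
  ext k
  have h0 := congrArg (fun z => z k) h
  have this : (if k ∈ s then (1:ℝ) else 0) = (if k ∈ t then (1:ℝ) else 0) := h0
  constructor <;> intro hk <;> by_contra hk' <;> simp [hk, hk'] at this

lemma D_JJ (s t : Finset (Fin 9)) (hs : s.card = 2) (ht : t.card = 2) (hne : s ≠ t) :
    ∑ k, (ptF s k - ptF t k)^2 = 2 ∨ ∑ k, (ptF s k - ptF t k)^2 = 4 := by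
  have hsum : ∑ k, (ptF t k)^2 = 2 := by
    have h0 : ∑ k, (ptF t k)^2 = (t.card : ℝ) := sum_ind_sq t
    rw [h0, ht]; norm_num
  rw [key s hs, sum_in_ptF, hsum]
  have hle : (s ∩ t).card ≤ 2 := ht ▸ Finset.card_le_card (Finset.inter_subset_right)
  have hne2 : (s ∩ t).card ≠ 2 := by
    intro h2
    have h1 : s ∩ t = s := Finset.eq_of_subset_of_card_le Finset.inter_subset_left (by omega)
    have h2' : s ∩ t = t := Finset.eq_of_subset_of_card_le Finset.inter_subset_right (by omega)
    exact hne (h1 ▸ h2')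
  interval_cases h : (s ∩ t).card
  · right; norm_num
  · left; norm_num
  · omega

lemma D_XX (p q : Fin 9) (hpq : p ≠ q) : ∑ k, (xp p k - xp q k)^2 = 2 := by
  have : ∀ k, (xp p k - xp q k)^2 = (if k = p then (1:ℝ) else 0) + (if k = q then (1:ℝ) else 0) := by
    intro k
    show ((if k = p then (-2/3:ℝ) else 1/3) - (if k = q then (-2/3:ℝ) else 1/3))^2 = _
    by_cases h1 : k = p <;> by_cases h2 : k = q <;> simp_all <;> norm_num
  rw [Finset.sum_congr rfl (fun k _ => this k), Finset.sum_add_distrib,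
    Finset.sum_ite_eq' Finset.univ p (fun _ => (1:ℝ)),
    Finset.sum_ite_eq' Finset.univ q (fun _ => (1:ℝ))]
  norm_num

lemma xp_inj {p q : Fin 9} (h : xp p = xp q) : p = q := by
  by_contra hpq
  have h0 := congrArg (fun z => z p) h
  have this : (if p = p then (-2/3:ℝ) else 1/3) = (if p = q then (-2/3:ℝ) else 1/3) := h0
  rw [if_pos rfl, if_neg hpq] at this
  norm_num at this

lemma ptF_ne_xp (s : Finset (Fin 9)) (hs : s.card = 2) (p : Fin 9) : ptF s ≠ xp p := by
  intro h
  have h0 := congrArg (fun z => z p) h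
  have this : (if p ∈ s then (1:ℝ) else 0) = (if p = p then (-2/3:ℝ) else 1/3) := h0
  rw [if_pos rfl] at this
  split at this <;> norm_num at this

lemma singleton_case (y : EuclideanSpace ℝ (Fin 9)) (hsum : ∑ i, y i = 2)
    (hP : ∀ i j : Fin 9, i ≠ j →
      y i + y j = (∑ k, (y k)^2)/2 ∨ y i + y j = (∑ k, (y k)^2)/2 - 1)
    (q : Fin 9) (u : ℝ) (hu : ∀ i, i ≠ q → y i = u) (hv : y q ≠ u) : y = xp q := by
  obtain ⟨j, l, hjl, hjq, hlq⟩ : ∃ j l : Fin 9, j ≠ l ∧ j ≠ q ∧ l ≠ q := by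
    by_cases h0 : q = 0
    · exact ⟨1, 2, by decide, by rw [h0]; decide, by rw [h0]; decide⟩
    · by_cases h1 : q = 1
      · exact ⟨0, 2, by decide, by rw [h1]; decide, by rw [h1]; decide⟩
      · exact ⟨0, 1, by decide, fun h => h0 h.symm, fun h => h1 h.symm⟩
  have hsum8 : 8 * u + y q = 2 := by
    have h0 : ∑ i ∈ Finset.univ.erase q, y i + y q = ∑ i, y i :=
      Finset.sum_erase_add _ _ (Finset.mem_univ q)
    rw [Finset.sum_congr rfl (fun i hi => hu i (Finset.ne_of_mem_erase hi)),
      Finset.sum_const, Finset.card_erase_of_mem (Finset.mem_univ q),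
      Finset.card_univ, Fintype.card_fin, hsum] at h0
    rw [← h0]; push_cast; ring
  have hc8 : ∑ k, (y k)^2 = 8 * u^2 + (y q)^2 := by
    have h0 : ∑ i ∈ Finset.univ.erase q, (y i)^2 + (y q)^2 = ∑ i, (y i)^2 :=
      Finset.sum_erase_add _ _ (Finset.mem_univ q)
    rw [Finset.sum_congr rfl (fun i hi => by rw [hu i (Finset.ne_of_mem_erase hi)]),
      Finset.sum_const, Finset.card_erase_of_mem (Finset.mem_univ q),
      Finset.card_univ, Fintype.card_fin] at h0
    rw [← h0]; push_cast; ring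
  have e1 := hP j l hjl
  have e2 := hP j q hjq
  rw [hu j hjq, hu l hlq, hc8] at e1
  rw [hu j hjq, hc8] at e2
  have hval : u = 1/3 ∧ y q = -2/3 := by
    rcases e1 with e1 | e1 <;> rcases e2 with e2 | e2
    · exact absurd (by linarith : y q = u) hv
    · constructor <;> linarith
    · -- u + u = A - 1, u + v = A  ⇒  v = u + 1, u = 1/9 : contradiction via quadratic
      exfalso
      have hu9 : u = 1/9 := by linarith
      have hv9 : y q = 10/9 := by linarith
      rw [hu9, hv9] at e1; norm_num at e1
    · exact absurd (by linarith : y q = u) hv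
  ext i
  show y i = if i = q then -2/3 else 1/3
  by_cases h : i = q
  · rw [if_pos h, h, hval.2]
  · rw [if_neg h, hu i h, hval.1]

lemma core (y : EuclideanSpace ℝ (Fin 9)) (hsum : ∑ i, y i = 2)
    (h : ∀ s : Finset (Fin 9), s.card = 2 → ptF s ≠ y →
      ∑ k, (ptF s k - y k)^2 = 2 ∨ ∑ k, (ptF s k - y k)^2 = 4) :
    (∃ s : Finset (Fin 9), s.card = 2 ∧ y = ptF s) ∨ ∃ p, y = xp p := by
  by_cases hJ : ∃ s : Finset (Fin 9), s.card = 2 ∧ y = ptF s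
  · exact Or.inl hJ
  right
  push_neg at hJ
  have hP : ∀ i j : Fin 9, i ≠ j →
      y i + y j = (∑ k, (y k)^2)/2 ∨ y i + y j = (∑ k, (y k)^2)/2 - 1 := by
    intro i j hij
    have hcard : ({i, j} : Finset (Fin 9)).card = 2 := Finset.card_pair hij
    have hne : ptF {i, j} ≠ y := fun hh => hJ _ hcard hh.symm
    have h0 := h _ hcard hne
    rw [key _ hcard y, Finset.sum_pair hij] at h0
    rcases h0 with h1 | h1
    · left; linarith
    · right; linarith
  have h3 : ∀ i j k : Fin 9, i ≠ j → i ≠ k → j ≠ k →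
      (y i = y j ∨ y i = y k ∨ y j = y k) := by
    intro i j k hij hik hjk
    rcases hP i j hij with h1 | h1 <;> rcases hP i k hik with h2 | h2 <;>
      rcases hP j k hjk with h4 | h4 <;>
      first
      | (left; linarith)
      | (right; left; linarith)
      | (right; right; linarith)
  have hne0 : ∃ q : Fin 9, y q ≠ y 0 := by
    by_contra hall
    push_neg at hall
    have hsum9 : (9:ℝ) * y 0 = 2 := by
      rw [← hsum, Finset.sum_congr rfl (fun i _ => hall i), Finset.sum_const,
        Finset.card_univ, Fintype.card_fin]
      push_cast; ring
    have hc9 : ∑ k, (y k)^2 = 9 * (y 0)^2 := by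
      rw [Finset.sum_congr rfl (fun i _ => by rw [hall i]), Finset.sum_const,
        Finset.card_univ, Fintype.card_fin]
      push_cast; ring
    have h01 := hP 0 1 (by decide)
    rw [hall 1, hc9] at h01
    have hy0 : y 0 = 2/9 := by linarith
    rw [hy0] at h01
    rcases h01 with h01 | h01 <;> norm_num at h01
  obtain ⟨q, hq⟩ := hne0
  have hq0 : q ≠ 0 := fun hh => hq (by rw [hh])
  have huv : ∀ i : Fin 9, y i = y 0 ∨ y i = y q := by
    intro i
    by_cases h0 : i = 0
    · left; rw [h0]
    by_cases hqq : i = q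
    · right; rw [hqq]
    rcases h3 0 q i (Ne.symm hq0) (fun hh => h0 hh.symm) (fun hh => hqq hh.symm) with
      hc | hc | hc
    · exact absurd hc.symm hq
    · exact Or.inl hc.symm
    · exact Or.inr hc.symm
  by_cases hEv : ∃ j, j ≠ q ∧ y j = y q
  · by_cases hEu : ∃ i, i ≠ 0 ∧ y i = y 0
    · exfalso
      obtain ⟨i, hi0, hiy⟩ := hEu
      obtain ⟨j, hjq, hjv⟩ := hEv
      have e1 := hP 0 i (fun hh => hi0 hh.symm)
      have e2 := hP q j (fun hh => hjq hh.symm)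
      have e3 := hP 0 q (Ne.symm hq0)
      rw [hiy] at e1
      rw [hjv] at e2
      rcases e1 with e1 | e1 <;> rcases e2 with e2 | e2 <;> rcases e3 with e3 | e3 <;>
        exact hq (by linarith)
    · push_neg at hEu
      have hu : ∀ i, i ≠ 0 → y i = y q := by
        intro i hi
        rcases huv i with hc | hc
        · exact absurd hc (hEu i hi)
        · exact hc
      exact ⟨0, singleton_case y hsum hP 0 (y q) hu (Ne.symm hq)⟩
  · push_neg at hEv
    have hu : ∀ i, i ≠ q → y i = y 0 := by
      intro i hi
      rcases huv i with hc | hc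
      · exact hc
      · exact absurd hc (hEv i hi)
    exact ⟨q, singleton_case y hsum hP q (y 0) hu hq⟩

lemma sqrt2_ne : Real.sqrt 2 ≠ 2 := by
  intro h
  have := Real.sq_sqrt (by norm_num : (0:ℝ) ≤ 2)
  rw [h] at this; norm_num at this

lemma ptF_mem_J {s : Finset (Fin 9)} (hs : s.card = 2) : ptF s ∈ JohnsonRep 9 2 := by
  rw [J_eq]; exact ⟨s, hs, rfl⟩

lemma ptF_mem_Hyp {s : Finset (Fin 9)} (hs : s.card = 2) : ptF s ∈ Hyp 9 2 := by
  show ∑ i, ptF s i = ((2:ℕ):ℝ)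
  have h0 : ∑ k ∈ Finset.univ, ptF s k = ((Finset.univ ∩ s).card : ℝ) := sum_in_ptF _ s
  rw [h0, Finset.univ_inter, hs]

lemma xp_mem_Hyp (p : Fin 9) : xp p ∈ Hyp 9 2 := by
  show ∑ i, xp p i = ((2:ℕ):ℝ)
  rw [← Finset.sum_erase_add _ _ (Finset.mem_univ p)]
  rw [Finset.sum_congr rfl (fun k hk => by
    rw [show xp p k = 1/3 from if_neg (Finset.ne_of_mem_erase hk)])]
  rw [Finset.sum_const, Finset.card_erase_of_mem (Finset.mem_univ p), Finset.card_univ,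
    Fintype.card_fin, show xp p p = -2/3 from if_pos rfl]
  norm_num

lemma distSet_mono {S T : Set (EuclideanSpace ℝ (Fin 9))} (h : S ⊆ T) :
    distSet S ⊆ distSet T := by
  rintro d ⟨x, hx, y, hy, hne, rfl⟩
  exact ⟨x, h hx, y, h hy, hne, rfl⟩

lemma D_symm (x y : EuclideanSpace ℝ (Fin 9)) :
    ∑ k, (x k - y k)^2 = ∑ k, (y k - x k)^2 :=
  Finset.sum_congr rfl fun k _ => by ring

lemma distSet_sub {S : Set (EuclideanSpace ℝ (Fin 9))} (h : S ⊆ JohnsonRep 9 2 ∪ X92) :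
    distSet S ⊆ {Real.sqrt 2, 2} := by
  rintro d ⟨x, hx, y, hy, hne, rfl⟩
  have hx' := h hx
  have hy' := h hy
  rw [J_eq, X_eq] at hx' hy'
  have : dist x y = Real.sqrt 2 ∨ dist x y = 2 := by
    rcases hx' with ⟨s, hs, rfl⟩ | ⟨p, rfl⟩ <;> rcases hy' with ⟨t, ht, rfl⟩ | ⟨q, rfl⟩
    · exact dist_cases (D_JJ s t hs ht (fun hh => hne (by rw [hh])))
    · exact dist_cases (D_JX s hs q)
    · rw [dist_comm]; exact dist_cases (D_JX t ht p)
    · exact Or.inl (by rw [dist_eq', D_XX p q (fun hh => hne (by rw [hh]))])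
  rcases this with h | h <;> simp [h]

lemma pt01_card : ({0, 1} : Finset (Fin 9)).card = 2 := by decide
lemma pt02_card : ({0, 2} : Finset (Fin 9)).card = 2 := by decide
lemma pt23_card : ({2, 3} : Finset (Fin 9)).card = 2 := by decide

lemma wit1 : dist (ptF {0, 1}) (ptF {0, 2}) = Real.sqrt 2 := by
  have hD : ∑ k, (ptF {0,1} k - ptF {0,2} k)^2 = 2 := by
    rw [key _ pt01_card, sum_in_ptF]
    have h1 : (({0,1} : Finset (Fin 9)) ∩ {0,2}).card = 1 := by decide
    have h2 : ∑ k, (ptF ({0,2} : Finset (Fin 9)) k)^2 = ((({0,2} : Finset (Fin 9)).card : ℕ) : ℝ) :=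
      sum_ind_sq _
    rw [h1, h2, pt02_card]; norm_num
  rw [dist_eq', hD]

lemma wit2 : dist (ptF {0, 1}) (ptF {2, 3}) = 2 := by
  have hD : ∑ k, (ptF {0,1} k - ptF {2,3} k)^2 = 4 := by
    rw [key _ pt01_card, sum_in_ptF]
    have h1 : (({0,1} : Finset (Fin 9)) ∩ {2,3}).card = 0 := by decide
    have h2 : ∑ k, (ptF ({2,3} : Finset (Fin 9)) k)^2 = ((({2,3} : Finset (Fin 9)).card : ℕ) : ℝ) :=
      sum_ind_sq _
    rw [h1, h2, pt23_card]; norm_num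
  rw [dist_eq', hD, show (4:ℝ) = 2^2 by norm_num, Real.sqrt_sq (by norm_num)]

lemma distSet_sup {S : Set (EuclideanSpace ℝ (Fin 9))} (h : JohnsonRep 9 2 ⊆ S) :
    {Real.sqrt 2, 2} ⊆ distSet S := by
  intro d hd
  rcases hd with hd | hd
  · exact ⟨ptF {0,1}, h (ptF_mem_J pt01_card), ptF {0,2}, h (ptF_mem_J pt02_card),
      fun hh => absurd (ptF_inj hh) (by decide), by rw [hd, wit1]⟩
  · rw [Set.mem_singleton_iff] at hd
    exact ⟨ptF {0,1}, h (ptF_mem_J pt01_card), ptF {2,3}, h (ptF_mem_J pt23_card),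
      fun hh => absurd (ptF_inj hh) (by decide), by rw [hd, wit2]⟩

lemma distSet_eq_of_two {S : Set (EuclideanSpace ℝ (Fin 9))} (hJS : JohnsonRep 9 2 ⊆ S)
    (hfin : (distSet S).Finite) (hn : (distSet S).ncard = 2) :
    distSet S = {Real.sqrt 2, 2} :=
  (Set.eq_of_subset_of_ncard_le (distSet_sup hJS)
    (by rw [hn, Set.ncard_pair sqrt2_ne]) hfin).symm

lemma reach (y : EuclideanSpace ℝ (Fin 9)) (hy : y ∈ Hyp 9 2)
    (hdists : ∀ x ∈ JohnsonRep 9 2, x ≠ y → dist x y = Real.sqrt 2 ∨ dist x y = 2) :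
    y ∈ JohnsonRep 9 2 ∪ X92 := by
  have hsum : ∑ i, y i = 2 := by
    have : ∑ i, y i = ((2:ℕ):ℝ) := hy
    rw [this]; norm_num
  rcases core y hsum (fun s hs hne => D_cases (hdists (ptF s) (ptF_mem_J hs) hne)) with
    ⟨s, hs, rfl⟩ | ⟨p, rfl⟩
  · exact Or.inl (ptF_mem_J hs)
  · exact Or.inr (X_eq ▸ ⟨p, rfl⟩)

lemma J_image : JohnsonRep 9 2 = ptF '' {s : Finset (Fin 9) | s.card = 2} := by
  rw [J_eq]
  ext x
  simp only [Set.mem_image, Set.mem_setOf_eq]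
  constructor
  · rintro ⟨s, h1, h2⟩; exact ⟨s, h1, h2.symm⟩
  · rintro ⟨s, h1, h2⟩; exact ⟨s, h1, h2.symm⟩

lemma J_finite : (JohnsonRep 9 2).Finite := by
  rw [J_image]; exact (Set.toFinite _).image _

lemma X_finite : X92.Finite := by
  rw [X_eq]; exact Set.finite_range _

lemma J_card : (JohnsonRep 9 2).ncard = 36 := by
  rw [J_image, Set.ncard_image_of_injective _ (fun a b h => ptF_inj h)]
  have h1 : {s : Finset (Fin 9) | s.card = 2} = ↑(Finset.powersetCard 2 (Finset.univ : Finset (Fin 9))) := by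
    ext s; simp [Finset.mem_powersetCard, Finset.subset_univ]
  rw [h1, Set.ncard_coe_finset, Finset.card_powersetCard, Finset.card_univ, Fintype.card_fin]
  decide

lemma X_card : X92.ncard = 9 := by
  rw [X_eq, ← Set.image_univ, Set.ncard_image_of_injective _ (fun a b h => xp_inj h),
    Set.ncard_univ, Nat.card_eq_fintype_card, Fintype.card_fin]

lemma JX_disjoint : Disjoint (JohnsonRep 9 2) X92 := by
  rw [Set.disjoint_left]
  intro x hx hx'
  rw [J_eq] at hx
  rw [X_eq] at hx'
  obtain ⟨s, hs, rfl⟩ := hx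
  obtain ⟨p, hp⟩ := hx'
  exact ptF_ne_xp s hs p hp.symm

theorem maximal_two_distance_J92' :
    (JohnsonRep 9 2 ∪ X92) ⊆ Hyp 9 2 ∧
    (JohnsonRep 9 2 ∪ X92).ncard = 45 ∧
    IsSDistanceSet 2 (JohnsonRep 9 2 ∪ X92) ∧
    distSet (JohnsonRep 9 2 ∪ X92) = {Real.sqrt 2, 2} ∧
    (∀ y ∈ Hyp 9 2, IsSDistanceSet 2 (JohnsonRep 9 2 ∪ {y}) →
      y ∈ JohnsonRep 9 2 ∪ X92) ∧
    (∀ T : Set (EuclideanSpace ℝ (Fin 9)), JohnsonRep 9 2 ⊆ T → T ⊆ Hyp 9 2 →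
      IsSDistanceSet 2 T →
      (¬∃ y ∈ Hyp 9 2 \ T, IsSDistanceSet 2 (T ∪ {y})) →
      T = JohnsonRep 9 2 ∪ X92) := by
  have hdistJX : distSet (JohnsonRep 9 2 ∪ X92) = {Real.sqrt 2, 2} :=
    Set.Subset.antisymm (distSet_sub subset_rfl) (distSet_sup Set.subset_union_left)
  refine ⟨?_, ?_, ?_, hdistJX, ?_, ?_⟩
  · rintro x (hx | hx)
    · rw [J_eq] at hx; obtain ⟨s, hs, rfl⟩ := hx; exact ptF_mem_Hyp hs
    · rw [X_eq] at hx; obtain ⟨p, rfl⟩ := hx; exact xp_mem_Hyp p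
  · rw [Set.ncard_union_eq JX_disjoint J_finite X_finite, J_card, X_card]
  · exact ⟨hdistJX ▸ (Set.toFinite _), by rw [hdistJX, Set.ncard_pair sqrt2_ne]⟩
  · intro y hy hsd
    have hJd : distSet (JohnsonRep 9 2 ∪ {y}) = {Real.sqrt 2, 2} :=
      distSet_eq_of_two Set.subset_union_left hsd.1 hsd.2
    refine reach y hy (fun x hx hne => ?_)
    have : dist x y ∈ distSet (JohnsonRep 9 2 ∪ {y}) :=
      ⟨x, Or.inl hx, y, Or.inr rfl, hne, rfl⟩
    rw [hJd] at this
    rcases this with h | h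
    · exact Or.inl h
    · exact Or.inr h
  · intro T hJT hTH hsd hmax
    have hTd : distSet T = {Real.sqrt 2, 2} := distSet_eq_of_two hJT hsd.1 hsd.2
    have hTsub : T ⊆ JohnsonRep 9 2 ∪ X92 := by
      intro y hyT
      refine reach y (hTH hyT) (fun x hx hne => ?_)
      have : dist x y ∈ distSet T := ⟨x, hJT hx, y, hyT, hne, rfl⟩
      rw [hTd] at this
      rcases this with h | h
      · exact Or.inl h
      · exact Or.inr h
    refine Set.Subset.antisymm hTsub (Set.union_subset hJT ?_)
    intro z hz
    by_contra hzT
    apply hmax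
    refine ⟨z, ⟨?_, hzT⟩, ?_, ?_⟩
    · rw [X_eq] at hz; obtain ⟨p, rfl⟩ := hz; exact xp_mem_Hyp p
    · have : distSet (T ∪ {z}) = {Real.sqrt 2, 2} := by
        apply Set.Subset.antisymm
        · exact distSet_sub (Set.union_subset hTsub (by simp [hz]))
        · exact distSet_sup (hJT.trans Set.subset_union_left)
      rw [this]; exact Set.toFinite _
    · have : distSet (T ∪ {z}) = {Real.sqrt 2, 2} := by
        apply Set.Subset.antisymm
        · exact distSet_sub (Set.union_subset hTsub (by simp [hz]))
        · exact distSet_sup (hJT.trans Set.subset_union_left)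
      rw [this, Set.ncard_pair sqrt2_ne]


theorem maximal_two_distance_J92 :
    (JohnsonRep 9 2 ∪ X92) ⊆ Hyp 9 2 ∧
    (JohnsonRep 9 2 ∪ X92).ncard = 45 ∧
    IsSDistanceSet 2 (JohnsonRep 9 2 ∪ X92) ∧
    distSet (JohnsonRep 9 2 ∪ X92) = {Real.sqrt 2, 2} ∧
    (∀ y ∈ Hyp 9 2, IsSDistanceSet 2 (JohnsonRep 9 2 ∪ {y}) →
      y ∈ JohnsonRep 9 2 ∪ X92) ∧
    (∀ T : Set (EuclideanSpace ℝ (Fin 9)), JohnsonRep 9 2 ⊆ T → T ⊆ Hyp 9 2 →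
      IsSDistanceSet 2 T →
      (¬∃ y ∈ Hyp 9 2 \ T, IsSDistanceSet 2 (T ∪ {y})) →
      T = JohnsonRep 9 2 ∪ X92) := by
  exact maximal_two_distance_J92'
end
end
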